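/- arXiv:2003.09502 — 4 statements merged into one kernel-verified Lean document; each statement's English description precedes it below -/
import Mathlib

section
/- Let G be a finite group and ρ a faithful finite-dimensional complex representation of G (i.e., ρ is injective). Then the McKay quiver of ρ is strongly connected: for all irreducible characters χ_i, χ_j of G there exists a natural number L ≥ 0 such that ⟨χ_ρ^L · χ_i, χ_j⟩ ≥ 1. -/
open scoped ComplexOrder

open Module Polynomial

/-- A function `χ : G → ℂ` is an irreducible character of `G` if it is the character of
some simple (irreducible) finite-dimensional complex representation of `G`. -/
def IsIrrChar (G : Type) [Group G] (χ : G → ℂ) : Prop :=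
  ∃ V : FDRep ℂ G, CategoryTheory.Simple V ∧ V.character = χ

/-- The standard inner product of complex-valued class functions on a finite group. -/
noncomputable def innChar (G : Type) [Group G] [Fintype G] (φ ψ : G → ℂ) : ℂ :=
  (Fintype.card G : ℂ)⁻¹ * ∑ g : G, φ g * (starRingEnd ℂ) (ψ g)

private lemma eig_pow_apply {V : Type*} [AddCommGroup V] [Module ℂ V]
    (f : Module.End ℂ V) {μ : ℂ} {x : V} (hx : x ∈ f.eigenspace μ) (j : ℕ) :
    (f ^ j) x = μ ^ j • x := by
  induction j with
  | zero => simp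
  | succ n ih =>
      have h1 : (f ^ (n + 1)) x = f ((f ^ n) x) := by rw [pow_succ']; rfl
      rw [h1, ih, map_smul, Module.End.mem_eigenspace_iff.mp hx, smul_smul, ← pow_succ]

private lemma abs_eq_one_of_pow {μ : ℂ} {k : ℕ} (hk : k ≠ 0) (h : μ ^ k = 1) :
    ‖μ‖ = 1 := by
  have h1 : ‖μ‖ ^ k = 1 := by
    rw [← norm_pow, h, norm_one]
  rcases lt_trichotomy (‖μ‖) 1 with hlt | heq | hgt
  · have := pow_lt_one₀ (norm_nonneg μ) hlt hk
    rw [h1] at this; exact absurd this (lt_irrefl _)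
  · exact heq
  · have := one_lt_pow₀ hgt hk
    rw [h1] at this; exact absurd this (lt_irrefl _)

/-- Master spectral lemma for a finite-order endomorphism over `ℂ`. -/
private lemma spec_main {V : Type*} [AddCommGroup V] [Module ℂ V] [FiniteDimensional ℂ V]
    (f : Module.End ℂ V) {k : ℕ} (hk : k ≠ 0) (hf : f ^ k = 1) :
    ∃ (s : Finset ℂ) (d : ℂ → ℕ),
      (∀ μ ∈ s, μ ^ k = 1) ∧
      (∀ μ ∈ s, 0 < d μ) ∧
      (∀ j : ℕ, LinearMap.trace ℂ V (f ^ j) = ∑ μ ∈ s, (d μ : ℂ) * μ ^ j) ∧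
      ((∀ μ ∈ s, μ = 1) → f = 1) := by
  classical
  have hkc : (k : ℂ) ≠ 0 := Nat.cast_ne_zero.mpr hk
  have hss : f.IsSemisimple := by
    apply Module.End.isSemisimple_of_squarefree_aeval_eq_zero
      ((Polynomial.separable_X_pow_sub_C (1 : ℂ) hkc one_ne_zero).squarefree)
    simp [map_sub, map_pow, hf]
  have hfs : f.IsFinitelySemisimple :=
    Module.End.isFinitelySemisimple_iff_isSemisimple.mpr hss
  have htop : ⨆ μ, f.eigenspace μ = ⊤ := by
    have h := Module.End.iSup_maxGenEigenspace_eq_top f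
    simpa only [hfs.maxGenEigenspace_eq_eigenspace] using h
  have hint : DirectSum.IsInternal f.eigenspace :=
    DirectSum.isInternal_submodule_of_iSupIndep_of_iSup_eq_top f.eigenspaces_iSupIndep htop
  have hfin : {μ : ℂ | f.eigenspace μ ≠ ⊥}.Finite :=
    WellFoundedGT.finite_ne_bot_of_iSupIndep f.eigenspaces_iSupIndep
  refine ⟨hfin.toFinset, fun μ => finrank ℂ (f.eigenspace μ), ?_, ?_, ?_, ?_⟩
  · intro μ hμ
    rw [Set.Finite.mem_toFinset] at hμ
    obtain ⟨x, hx, hx0⟩ := (Submodule.ne_bot_iff _).mp hμ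
    have h1 : (f ^ k) x = μ ^ k • x := eig_pow_apply f hx k
    rw [hf] at h1
    have h2 : (μ ^ k - 1) • x = 0 := by
      rw [sub_smul, one_smul, ← h1]; simp
    rcases smul_eq_zero.mp h2 with h | h
    · exact sub_eq_zero.mp h
    · exact absurd h hx0
  · intro μ hμ
    rw [Set.Finite.mem_toFinset] at hμ
    have : Nontrivial (f.eigenspace μ) := Submodule.nontrivial_iff_ne_bot.mpr hμ
    exact finrank_pos
  · intro j
    have hmaps : ∀ μ : ℂ, Set.MapsTo (f ^ j) (f.eigenspace μ) (f.eigenspace μ) := by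
      intro μ x hx
      rw [SetLike.mem_coe] at hx ⊢
      rw [eig_pow_apply f hx j]
      exact Submodule.smul_mem _ _ hx
    rw [LinearMap.trace_eq_sum_trace_restrict' hint hfin (fun μ => hmaps μ)]
    apply Finset.sum_congr rfl
    intro μ hμ
    have hres : (f ^ j).restrict (hmaps μ) =
        (μ ^ j) • (LinearMap.id : f.eigenspace μ →ₗ[ℂ] f.eigenspace μ) := by
      ext x
      simp only [LinearMap.restrict_apply, LinearMap.smul_apply, LinearMap.id_apply]
      change (f ^ j) (x : V) = μ ^ j • (x : V)
      exact eig_pow_apply f x.2 j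
    rw [hres, map_smul, LinearMap.trace_id, smul_eq_mul, mul_comm]
  · intro hall
    have hle : ⨆ μ, f.eigenspace μ ≤ f.eigenspace 1 := by
      apply iSup_le
      intro μ
      by_cases hμ : f.eigenspace μ = ⊥
      · rw [hμ]; exact bot_le
      · have : μ = 1 := hall μ (Set.Finite.mem_toFinset hfin |>.mpr hμ)
        rw [this]
    have htop1 : f.eigenspace 1 = ⊤ := top_le_iff.mp (htop ▸ hle)
    ext x
    have hx : x ∈ f.eigenspace 1 := htop1 ▸ Submodule.mem_top
    rw [Module.End.mem_eigenspace_iff] at hx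
    simpa using hx

private lemma char_conj_eq {G : Type} [Group G] [Fintype G] (V : FDRep ℂ G) (g : G) :
    (starRingEnd ℂ) (V.character g) = V.character g⁻¹ := by
  classical
  have hk : Fintype.card G ≠ 0 := Fintype.card_ne_zero
  set k := Fintype.card G with hkdef
  set f : Module.End ℂ V := V.ρ g with hfdef
  have hf : f ^ k = 1 := by rw [hfdef, ← map_pow, pow_card_eq_one, map_one]
  obtain ⟨s, d, hroot, hpos, htr, _⟩ := spec_main f hk hf
  have hginv : g⁻¹ = g ^ (k - 1) := by
    apply inv_eq_of_mul_eq_one_right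
    rw [← pow_succ' g (k - 1), Nat.sub_add_cancel (Nat.one_le_iff_ne_zero.mpr hk)]
    exact pow_card_eq_one
  have h1 : V.character g⁻¹ = LinearMap.trace ℂ V (f ^ (k - 1)) := by
    rw [hginv, hfdef, ← map_pow]; rfl
  have h2 : V.character g = LinearMap.trace ℂ V (f ^ 1) := by rw [pow_one]; rfl
  rw [h1, h2, htr 1, htr (k - 1), map_sum]
  apply Finset.sum_congr rfl
  intro μ hμ
  have habs : ‖μ‖ = 1 := abs_eq_one_of_pow hk (hroot μ hμ)
  have hconj : (starRingEnd ℂ) μ = μ⁻¹ :=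
    (Complex.inv_eq_conj (by rw [habs])).symm
  have hinv : μ ^ (k - 1) = μ⁻¹ := by
    apply eq_inv_of_mul_eq_one_right
    rw [← pow_succ' μ (k - 1), Nat.sub_add_cancel (Nat.one_le_iff_ne_zero.mpr hk)]
    exact hroot μ hμ
  rw [map_mul, map_natCast, pow_one, hconj, hinv]

private lemma rho_eq_one_of_char {G : Type} [Group G] [Fintype G] (V : FDRep ℂ G) {g : G}
    (h : V.character g = V.character 1) : V.ρ g = 1 := by
  classical
  have hk : Fintype.card G ≠ 0 := Fintype.card_ne_zero
  set k := Fintype.card G with hkdef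
  set f : Module.End ℂ V := V.ρ g with hfdef
  have hf : f ^ k = 1 := by rw [hfdef, ← map_pow, pow_card_eq_one, map_one]
  obtain ⟨s, d, hroot, hpos, htr, hone⟩ := spec_main f hk hf
  have e1 : V.character g = ∑ μ ∈ s, (d μ : ℂ) * μ := by
    have := htr 1
    rw [pow_one] at this
    simp only [pow_one] at this; exact this
  have e0 : (V.character 1 : ℂ) = ∑ μ ∈ s, (d μ : ℂ) := by
    have := htr 0
    rw [pow_zero, LinearMap.trace_one] at this
    simp only [pow_zero, mul_one] at this
    rw [FDRep.char_one]
    exact this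
  have h1 : (∑ μ ∈ s, (d μ : ℂ) * μ) = ∑ μ ∈ s, (d μ : ℂ) := by
    rw [← e1, ← e0, h]
  have hre : (∑ μ ∈ s, (d μ : ℝ) * μ.re) = ∑ μ ∈ s, (d μ : ℝ) := by
    have := congrArg Complex.re h1
    simpa [Complex.mul_re] using this
  have hrele : ∀ ν ∈ s, (d ν : ℝ) * ν.re ≤ (d ν : ℝ) := by
    intro ν hν
    have hle : ν.re ≤ 1 := by
      have h := Complex.re_le_norm ν
      rwa [abs_eq_one_of_pow hk (hroot ν hν)] at h
    exact mul_le_of_le_one_right (by positivity) hle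
  apply hone
  intro μ hμ
  have heq : (d μ : ℝ) * μ.re = (d μ : ℝ) :=
    (Finset.sum_eq_sum_iff_of_le hrele).mp hre μ hμ
  have hd : (0 : ℝ) < d μ := by exact_mod_cast hpos μ hμ
  have hre1 : μ.re = 1 := by
    have := mul_left_cancel₀ (ne_of_gt hd) (by rw [heq, mul_one] : (d μ : ℝ) * μ.re = (d μ : ℝ) * 1)
    exact this
  have habs : ‖μ‖ = 1 := abs_eq_one_of_pow hk (hroot μ hμ)
  have hns : μ.re * μ.re + μ.im * μ.im = 1 := by
    rw [← Complex.normSq_apply, ← Complex.sq_norm, habs]; norm_num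
  have him : μ.im = 0 := by nlinarith
  apply Complex.ext
  · rw [hre1, Complex.one_re]
  · rw [him, Complex.one_im]

open CategoryTheory MonoidalCategory in
private lemma exists_char_pow {G : Type} [Group G] [Fintype G] (ρ Vi : FDRep ℂ G) :
    ∀ L : ℕ, ∃ W : FDRep ℂ G, W.character = ρ.character ^ L * Vi.character
  | 0 => ⟨Vi, by simp⟩
  | (L + 1) => by
      obtain ⟨W, hW⟩ := exists_char_pow ρ Vi L
      refine ⟨ρ ⊗ W, ?_⟩
      rw [FDRep.char_tensor, hW]
      ring

open CategoryTheory MonoidalCategory in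
private lemma innChar_nat {G : Type} [Group G] [Fintype G] (ρ Vi Vj : FDRep ℂ G) (L : ℕ) :
    ∃ n : ℕ, innChar G (ρ.character ^ L * Vi.character) Vj.character = n := by
  classical
  obtain ⟨W, hW⟩ := exists_char_pow ρ Vi L
  haveI : Invertible ((Fintype.card G : ℂ)) :=
    invertibleOfNonzero (Nat.cast_ne_zero.mpr Fintype.card_ne_zero)
  set D : FDRep ℂ G := FDRep.of (Representation.dual Vj.ρ) with hD
  refine ⟨finrank ℂ (Representation.invariants (W ⊗ D).ρ), ?_⟩
  have key := FDRep.average_char_eq_finrank_invariants (W ⊗ D)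
  rw [innChar]
  have hsum : ∀ g : G, (ρ.character ^ L * Vi.character) g * (starRingEnd ℂ) (Vj.character g)
      = (W ⊗ D).character g := by
    intro g
    rw [FDRep.char_tensor, Pi.mul_apply, hW, char_conj_eq]
    congr 1
    exact (FDRep.char_dual Vj g).symm
  simp_rw [hsum]
  rw [← key, Nat.card_eq_fintype_card]

private lemma finrank_pos_of_simple {G : Type} [Group G] (V : FDRep ℂ G)
    (hs : CategoryTheory.Simple V) : 0 < finrank ℂ V := by
  by_contra h
  push_neg at h
  have h0 : finrank ℂ V = 0 := Nat.le_zero.mp h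
  have hsub : Subsingleton V := finrank_zero_iff.mp h0
  have hsub2 : Subsingleton ((CategoryTheory.forget (FGModuleCat ℂ)).obj V.V) := hsub
  exact CategoryTheory.id_nonzero V (by ext v; exact Subsingleton.elim _ _)

/-- If `ρ` is a faithful finite-dimensional complex representation of `G`, then the McKay
quiver of `ρ` is strongly connected: for all irreducible characters `χᵢ, χⱼ` there is a
walk from the vertex of `χᵢ` to the vertex of `χⱼ`, i.e. there exists `L ≥ 0` with
`⟨χ_ρ^L · χᵢ, χⱼ⟩ ≥ 1`. -/
theorem mckay_quiver_strongly_connected_of_faithful (G : Type) [Group G] [Fintype G]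
    (ρ : FDRep ℂ G) (hfaithful : Function.Injective ρ.ρ)
    (χi χj : G → ℂ) (hχi : IsIrrChar G χi) (hχj : IsIrrChar G χj) :
    ∃ L : ℕ, 1 ≤ innChar G (ρ.character ^ L * χi) χj := by
  classical
  obtain ⟨Vi, hVis, rfl⟩ := hχi
  obtain ⟨Vj, hVjs, rfl⟩ := hχj
  by_contra hcon
  have hzero : ∀ L : ℕ, innChar G (ρ.character ^ L * Vi.character) Vj.character = 0 := by
    intro L
    obtain ⟨n, hn⟩ := innChar_nat ρ Vi Vj L
    rcases Nat.eq_zero_or_pos n with h0 | h1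
    · rw [hn, h0, Nat.cast_zero]
    · exfalso
      apply hcon
      refine ⟨L, ?_⟩
      rw [hn]
      exact_mod_cast h1
  set x : G → ℂ := ρ.character with hxdef
  set a : G → ℂ := fun g => Vi.character g * (starRingEnd ℂ) (Vj.character g) with hadef
  have hS : ∀ L : ℕ, ∑ g : G, a g * x g ^ L = 0 := by
    intro L
    have h := hzero L
    rw [innChar] at h
    have hcard : ((Fintype.card G : ℂ))⁻¹ ≠ 0 :=
      inv_ne_zero (Nat.cast_ne_zero.mpr Fintype.card_ne_zero)
    rcases mul_eq_zero.mp h with h' | h'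
    · exact absurd h' hcard
    · rw [← h']
      apply Finset.sum_congr rfl
      intro g _
      simp only [Pi.mul_apply, Pi.pow_apply, hadef, hxdef]
      ring
  have hP : ∀ p : Polynomial ℂ, ∑ g : G, a g * p.eval (x g) = 0 := by
    intro p
    have hrw : ∀ g : G, a g * p.eval (x g)
        = ∑ i ∈ Finset.range (p.natDegree + 1), p.coeff i * (a g * x g ^ i) := by
      intro g
      rw [Polynomial.eval_eq_sum_range, Finset.mul_sum]
      exact Finset.sum_congr rfl fun i _ => by ring
    simp_rw [hrw]
    rw [Finset.sum_comm]
    refine Finset.sum_eq_zero fun i _ => ?_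
    rw [← Finset.mul_sum, hS i, mul_zero]
  have hker : ∀ g : G, x g = x 1 → g = 1 := by
    intro g hg
    apply hfaithful
    rw [map_one]
    exact rho_eq_one_of_char ρ hg
  set T : Finset ℂ := Finset.image x Finset.univ with hT
  have hmem1 : x 1 ∈ T := Finset.mem_image_of_mem x (Finset.mem_univ 1)
  have key := hP (Lagrange.basis T (id : ℂ → ℂ) (x 1))
  have heval : ∀ g : G, (Lagrange.basis T (id : ℂ → ℂ) (x 1)).eval (x g) = if g = 1 then 1 else 0 := by
    intro g
    by_cases hg : g = 1
    · subst hg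
      rw [if_pos rfl]
      exact Lagrange.eval_basis_self (s := T) (v := (id : ℂ → ℂ)) (Set.injOn_id _) hmem1
    · rw [if_neg hg]
      have hne : x 1 ≠ x g := fun h => hg (hker g h.symm)
      exact Lagrange.eval_basis_of_ne (s := T) (v := (id : ℂ → ℂ)) hne (Finset.mem_image_of_mem x (Finset.mem_univ g))
  simp_rw [heval, mul_ite, mul_one, mul_zero] at key
  rw [Finset.sum_ite_eq' Finset.univ (1 : G) a, if_pos (Finset.mem_univ 1)] at key
  have hi : 0 < finrank ℂ Vi := finrank_pos_of_simple Vi hVis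
  have hj : 0 < finrank ℂ Vj := finrank_pos_of_simple Vj hVjs
  rw [hadef] at key
  simp only [FDRep.char_one, map_natCast] at key
  rcases mul_eq_zero.mp key with h' | h'
  · exact absurd h' (Nat.cast_ne_zero.mpr (Nat.pos_iff_ne_zero.mp hi))
  · exact absurd h' (Nat.cast_ne_zero.mpr (Nat.pos_iff_ne_zero.mp hj))
end

section
/- Let G be a finite group, ρ a finite-dimensional complex representation of G with character χ_ρ, and N = ker ρ = {g ∈ G : ρ(g) = id}. Let χ_i, χ_j be irreducible characters of G. If there exists a natural number L ≥ 0 such that ⟨χ_ρ^L · χ_i, χ_j⟩ ≥ 1 (i.e., there is a walk from the vertex of χ_i to the vertex of χ_j in the McKay quiver), then the restrictions of χ_i and χ_j to N are proportional: there exists c ∈ ℂ with χ_i(n) = c · χ_j(n) for all n ∈ N. -/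
open scoped ComplexOrder

namespace McKayAux

open CategoryTheory Module FDRep Matrix

variable {G : Type} [Group G] [Fintype G]

/-- Lemma A: the class sum of `n` acts on a simple representation as a scalar `c`
with `|G| χ(n) = c χ(1)`. -/
theorem lemA (V : FDRep ℂ G) [Simple V] (n : G) :
    ∃ c : ℂ, (∑ g : G, V.ρ (g * n * g⁻¹)) = c • (1 : V.V →ₗ[ℂ] V.V) ∧
      (Fintype.card G : ℂ) * V.character n = c * V.character 1 := by
  have hcomm : ∀ h : G,
      (∑ g : G, V.ρ (g * n * g⁻¹)) * (V.ρ h) = (V.ρ h) * (∑ g : G, V.ρ (g * n * g⁻¹)) := by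
    intro h
    rw [Finset.sum_mul, Finset.mul_sum]
    rw [← Equiv.sum_comp (Equiv.mulLeft h) (fun g => V.ρ (g * n * g⁻¹) * V.ρ h)]
    refine Finset.sum_congr rfl fun g _ => ?_
    simp only [Equiv.coe_mulLeft]
    rw [← _root_.map_mul, ← _root_.map_mul]
    congr 1
    group
  let T : V ⟶ V := ⟨FGModuleCat.ofHom (∑ g : G, V.ρ (g * n * g⁻¹)), fun h => by
    ext x; exact LinearMap.congr_fun (hcomm h) x⟩
  obtain ⟨c, hc⟩ := CategoryTheory.endomorphism_simple_eq_smul_id ℂ T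
  have hc' : (∑ g : G, V.ρ (g * n * g⁻¹)) = c • (1 : V.V →ₗ[ℂ] V.V) := by
    have := congrArg (fun f : V ⟶ V => f.hom.hom.hom) hc
    exact this.symm
  refine ⟨c, hc', ?_⟩
  have htr := congrArg (LinearMap.trace ℂ V.V) hc'
  rw [map_sum] at htr
  simp only [LinearMap.map_smul, LinearMap.trace_one] at htr
  have : ∀ g : G, LinearMap.trace ℂ V.V (V.ρ (g * n * g⁻¹)) = V.character n := fun g =>
    V.char_conj n g
  rw [Finset.sum_congr rfl fun g _ => this g, Finset.sum_const, Finset.card_univ] at htr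
  rw [char_one]
  simpa [nsmul_eq_mul, mul_comm] using htr

/-- Lemma B: a nonzero equivariant map forces the class-sum scalars on source and target
to agree. -/
theorem lemB {U X : FDRep ℂ G} (φ : U ⟶ X) (hφ : φ ≠ 0) (n : G) (a b : ℂ)
    (hU : (∑ g : G, U.ρ (g * n * g⁻¹)) = a • (1 : U.V →ₗ[ℂ] U.V))
    (hX : (∑ g : G, X.ρ (g * n * g⁻¹)) = b • (1 : X.V →ₗ[ℂ] X.V)) : a = b := by
  have hf : (φ.hom.hom.hom : U.V →ₗ[ℂ] X.V) ≠ 0 := by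
    intro h0
    apply hφ
    apply Action.hom_ext
    apply FGModuleCat.hom_ext
    exact h0
  have key : ∀ x : U.V, φ.hom ((∑ g : G, U.ρ (g * n * g⁻¹)) x)
      = (∑ g : G, X.ρ (g * n * g⁻¹)) (φ.hom x) := by
    intro x
    rw [LinearMap.sum_apply, LinearMap.sum_apply, map_sum]
    refine Finset.sum_congr rfl fun g _ => ?_
    have := φ.comm (g * n * g⁻¹)
    exact congrArg (fun f : U.V ⟶ X.V => f.hom.hom x) this
  have key2 : ∀ x : U.V, a • φ.hom x = b • φ.hom x := by
    intro x
    have h := key x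
    rw [hU, hX] at h
    exact (map_smul (φ.hom.hom.hom : U.V →ₗ[ℂ] X.V) a x).symm.trans h
  by_contra hab
  apply hf
  ext x
  have := key2 x
  have h2 : (a - b) • (φ.hom x) = 0 := by rw [sub_smul, this]; simp
  rcases smul_eq_zero.1 h2 with h | h
  · exact absurd (sub_eq_zero.1 h) hab
  · exact h

/-- Lemma C: if the pairing `∑ χ_U(g⁻¹) χ_X(g)` is nonzero, there is a nonzero
`G`-equivariant morphism `U ⟶ X`. -/
theorem lemC (U X : FDRep ℂ G)
    (h : (∑ g : G, U.character g⁻¹ * X.character g) ≠ 0) :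
    ∃ φ : U ⟶ X, φ ≠ 0 := by
  letI : Invertible (Fintype.card G : ℂ) :=
    invertibleOfNonzero (by exact_mod_cast (Nat.cast_ne_zero (R := ℂ)).2 Fintype.card_ne_zero)
  by_contra hphi
  push_neg at hphi
  apply h
  have h5 : finrank ℂ (U ⟶ X) = 0 := by
    have : Subsingleton (U ⟶ X) := ⟨fun a b => by rw [hphi a, hphi b]⟩
    exact finrank_zero_iff.2 this
  set Y := FDRep.of (Representation.linHom U.ρ X.ρ) with hY
  have h1 : (∑ g : G, U.character g⁻¹ * X.character g) = ∑ g : G, Y.character g :=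
    Finset.sum_congr rfl fun g _ => (char_linHom U X g).symm
  rw [h1]
  have h2 := average_char_eq_finrank_invariants Y
  have e2 : finrank ℂ (Representation.invariants Y.ρ) = finrank ℂ (U ⟶ X) :=
    (Representation.linHom.invariantsEquivFDRepHom (k := ℂ) (G := G) U X).finrank_eq
  rw [e2, h5] at h2
  have h6 : (⅟ (Fintype.card G : ℂ)) • ∑ g : G, Y.character g = 0 := by
    rw [invOf_eq_inv, smul_eq_mul, Fintype.card_eq_nat_card, h2]; norm_num
  rcases smul_eq_zero.1 h6 with h7 | h7
  · exact absurd h7 (Invertible.ne_zero _)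
  · exact h7

/-- The matrix of `W.ρ g` in a fixed basis. -/
noncomputable def rmat (W : FDRep ℂ G) (g : G) :
    Matrix (Fin (finrank ℂ W)) (Fin (finrank ℂ W)) ℂ :=
  LinearMap.toMatrix (Module.finBasis ℂ W) (Module.finBasis ℂ W) (W.ρ g)

/-- The conjugate-dual representation, `g ↦ (conj (matrix of ρ g⁻¹))ᵀ`. -/
noncomputable def conjDual (W : FDRep ℂ G) : FDRep ℂ G :=
  FDRep.of (V := Fin (finrank ℂ W) → ℂ)
    { toFun := fun g => Matrix.toLin' (((rmat W g⁻¹).map (starRingEnd ℂ))ᵀ)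
      map_one' := by
        simp only [inv_one, rmat, _root_.map_one, LinearMap.toMatrix_one]
        simp only [Matrix.map_one _ (map_zero _) (map_one _), Matrix.transpose_one,
          Matrix.toLin'_one]
        rfl
      map_mul' := fun g h => by
        have : rmat W (g * h)⁻¹ = rmat W h⁻¹ * rmat W g⁻¹ := by
          rw [_root_.mul_inv_rev, rmat, _root_.map_mul, LinearMap.toMatrix_mul]
          rfl
        simp only [this, Matrix.map_mul, Matrix.transpose_mul, Matrix.toLin'_mul]
        rfl }

theorem conjDual_ρ (W : FDRep ℂ G) (g : G) :
    (conjDual W).ρ g = Matrix.toLin' (((rmat W g⁻¹).map (starRingEnd ℂ))ᵀ) := rfl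

theorem trace_aux (d : ℕ) (A : Matrix (Fin d) (Fin d) ℂ) :
    LinearMap.trace ℂ (Fin d → ℂ) (Matrix.toLin' A) = A.trace := by
  rw [LinearMap.trace_eq_matrix_trace ℂ (Pi.basisFun ℂ (Fin d))]
  rw [LinearMap.toMatrix_eq_toMatrix']
  rw [LinearMap.toMatrix'_toLin']

theorem map_conj_trace (d : ℕ) (A : Matrix (Fin d) (Fin d) ℂ) :
    (A.map (starRingEnd ℂ)).trace = (starRingEnd ℂ) A.trace := by
  simp [Matrix.trace, Matrix.diag, map_sum]

theorem conjDual_char (W : FDRep ℂ G) (g : G) :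
    (conjDual W).character g = (starRingEnd ℂ) (W.character g⁻¹) := by
  show LinearMap.trace ℂ (Fin (finrank ℂ W) → ℂ)
      (Matrix.toLin' (((rmat W g⁻¹).map (starRingEnd ℂ))ᵀ)) = (starRingEnd ℂ) (W.character g⁻¹)
  rw [trace_aux, Matrix.trace_transpose, map_conj_trace]
  rw [FDRep.character, LinearMap.trace_eq_matrix_trace ℂ (Module.finBasis ℂ W), rmat]

/-- The conjugate-dual "matrixification" as an additive monoid hom. -/
noncomputable def Psi (W : FDRep ℂ G) :
    (W.V →ₗ[ℂ] W.V) →+ ((Fin (finrank ℂ W) → ℂ) →ₗ[ℂ] (Fin (finrank ℂ W) → ℂ)) where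
  toFun f := Matrix.toLin'
    (((LinearMap.toMatrix (Module.finBasis ℂ W) (Module.finBasis ℂ W) f).map (starRingEnd ℂ))ᵀ)
  map_zero' := by
    simp
  map_add' f₁ f₂ := by
    have : ∀ (A B : Matrix (Fin (finrank ℂ W)) (Fin (finrank ℂ W)) ℂ),
        ((A + B).map (starRingEnd ℂ)) = A.map (starRingEnd ℂ) + B.map (starRingEnd ℂ) := by
      intro A B; ext i j; simp
    simp [map_add, this, Matrix.transpose_add]

theorem Psi_smul_one (W : FDRep ℂ G) (c : ℂ) :
    Psi W (c • 1) = (starRingEnd ℂ) c • (1 : (Fin (finrank ℂ W) → ℂ) →ₗ[ℂ] _) := by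
  show Matrix.toLin' _ = _
  have h1 : (LinearMap.toMatrix (Module.finBasis ℂ W) (Module.finBasis ℂ W) (c • 1))
      = c • (1 : Matrix (Fin (finrank ℂ W)) (Fin (finrank ℂ W)) ℂ) := by
    rw [_root_.map_smul, LinearMap.toMatrix_one]
  rw [h1]
  have h2 : ((c • (1 : Matrix (Fin (finrank ℂ W)) (Fin (finrank ℂ W)) ℂ)).map (starRingEnd ℂ))
      = (starRingEnd ℂ) c • (1 : Matrix (Fin (finrank ℂ W)) (Fin (finrank ℂ W)) ℂ) := by
    ext i j
    by_cases h : i = j <;> simp [Matrix.one_apply, h]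
  rw [h2, Matrix.transpose_smul, Matrix.transpose_one, _root_.map_smul, Matrix.toLin'_one]
  rfl

theorem conjDual_sum (W : FDRep ℂ G) (n : G) (c : ℂ)
    (hc : (∑ g : G, W.ρ (g * n⁻¹ * g⁻¹)) = c • (1 : W.V →ₗ[ℂ] W.V)) :
    (∑ g : G, (conjDual W).ρ (g * n * g⁻¹))
      = (starRingEnd ℂ) c • (1 : (conjDual W).V →ₗ[ℂ] (conjDual W).V) := by
  have h1 : ∀ g : G, (conjDual W).ρ (g * n * g⁻¹) = Psi W (W.ρ (g * n⁻¹ * g⁻¹)) := by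
    intro g
    rw [conjDual_ρ]
    have : (g * n * g⁻¹)⁻¹ = g * n⁻¹ * g⁻¹ := by group
    rw [this]
    rfl
  exact (Finset.sum_congr rfl fun g _ => h1 g).trans
    ((_root_.map_sum (Psi W) (fun g : G => W.ρ (g * n⁻¹ * g⁻¹)) Finset.univ).symm.trans
      (by rw [hc, Psi_smul_one]; rfl))

/-- Lemma D: for a simple complex representation of a finite group,
`χ(n) = conj (χ(n⁻¹))`. -/
theorem char_one_ne_zero (W : FDRep ℂ G) [Simple W] : W.character 1 ≠ 0 := by
  rw [char_one]
  have : finrank ℂ W ≠ 0 := by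
    intro h0
    have hsub : Subsingleton W.V := finrank_zero_iff.1 h0
    apply CategoryTheory.id_nonzero W
    apply Action.hom_ext
    apply FGModuleCat.hom_ext
    apply LinearMap.ext
    intro x
    exact @Subsingleton.elim _ hsub _ _
  exact_mod_cast this

theorem lemD (W : FDRep ℂ G) [Simple W] (n : G) :
    W.character n = (starRingEnd ℂ) (W.character n⁻¹) := by
  have hfr : W.character 1 ≠ 0 := char_one_ne_zero W
  -- nonzero pairing between conjDual W and W
  have hpair : (∑ g : G, (conjDual W).character g⁻¹ * W.character g) ≠ 0 := by
    have h1 : ∀ g : G, (conjDual W).character g⁻¹ * W.character g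
        = ((Complex.normSq (W.character g) : ℝ) : ℂ) := by
      intro g
      rw [conjDual_char, inv_inv]
      rw [mul_comm]
      exact Complex.mul_conj _
    rw [Finset.sum_congr rfl fun g _ => h1 g]
    rw [← Complex.ofReal_sum]
    rw [Complex.ofReal_ne_zero]
    have hle : Complex.normSq (W.character 1) ≤ ∑ g : G, Complex.normSq (W.character g) :=
      Finset.single_le_sum (f := fun g => Complex.normSq (W.character g))
        (fun g _ => Complex.normSq_nonneg _) (Finset.mem_univ 1)
    have hpos : 0 < Complex.normSq (W.character 1) := by
      rw [Complex.normSq_pos]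
      exact hfr
    exact ne_of_gt (lt_of_lt_of_le hpos hle)
  obtain ⟨φ, hφ⟩ := lemC (conjDual W) W hpair
  obtain ⟨c, hc, hc2⟩ := lemA W n
  obtain ⟨c', hc', hc2'⟩ := lemA W n⁻¹
  have hCD := conjDual_sum W n c' hc'
  have heq : (starRingEnd ℂ) c' = c := lemB φ hφ n _ _ hCD hc
  -- |G| χ(n) = c χ(1) and |G| χ(n⁻¹) = c' χ(1)
  have hconj2 := congrArg (starRingEnd ℂ) hc2'
  simp only [_root_.map_mul] at hconj2
  have hcard : (starRingEnd ℂ) ((Fintype.card G : ℂ)) = (Fintype.card G : ℂ) := by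
    simp
  have hone : (starRingEnd ℂ) (W.character 1) = W.character 1 := by
    rw [char_one]; simp
  rw [hcard, hone, heq] at hconj2
  -- hconj2 : card * conj (χ n⁻¹) = c * χ 1 ; hc2 : card * χ n = c * χ 1
  have : (Fintype.card G : ℂ) * W.character n
      = (Fintype.card G : ℂ) * (starRingEnd ℂ) (W.character n⁻¹) := by
    rw [hc2, hconj2]
  have hcard0 : (Fintype.card G : ℂ) ≠ 0 := by
    exact_mod_cast (Nat.cast_ne_zero (R := ℂ)).2 Fintype.card_ne_zero
  exact mul_left_cancel₀ hcard0 this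

/-- Tensor powers of a representation. -/
noncomputable def powRep (ρ : FDRep ℂ G) : ℕ → FDRep ℂ G
  | 0 => FDRep.of (Representation.trivial ℂ (G := G) (V := ℂ))
  | (L + 1) => FDRep.of (Representation.tprod ρ.ρ ((powRep ρ L).ρ))

theorem powRep_char (ρ : FDRep ℂ G) : ∀ (L : ℕ) (g : G),
    (powRep ρ L).character g = (ρ.character g) ^ L := by
  intro L
  induction L with
  | zero =>
    intro g
    show LinearMap.trace ℂ ℂ ((Representation.trivial ℂ (G := G) (V := ℂ)) g) = _
    simp [Representation.trivial]
  | succ L ih =>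
    intro g
    show LinearMap.trace ℂ (TensorProduct ℂ ρ.V (powRep ρ L).V)
        (TensorProduct.map (ρ.ρ g) ((powRep ρ L).ρ g)) = _
    rw [LinearMap.trace_tensorProduct' (ρ.ρ g) ((powRep ρ L).ρ g)]
    rw [pow_succ]
    have h2 : LinearMap.trace ℂ _ ((powRep ρ L).ρ g) = (powRep ρ L).character g := rfl
    have h1 : LinearMap.trace ℂ _ (ρ.ρ g) = ρ.character g := rfl
    rw [h1, h2, ih g]
    ring

theorem powRep_triv (ρ : FDRep ℂ G) (n : G) (hn : ρ.ρ n = 1) :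
    ∀ L : ℕ, (powRep ρ L).ρ n = 1 := by
  intro L
  induction L with
  | zero => rfl
  | succ L ih =>
    show (Representation.tprod ρ.ρ ((powRep ρ L).ρ)) n = 1
    rw [Representation.tprod_apply, hn, ih]
    rw [Module.End.one_eq_id, Module.End.one_eq_id, TensorProduct.map_id]
    rfl

/-- The class sum acts on `P ⊗ V` by the same scalar as on `V`, provided `P` is trivial on
the relevant conjugates. -/
theorem lemX (P V' : FDRep ℂ G) (n : G) (hP : ∀ g : G, P.ρ (g * n * g⁻¹) = 1) (c : ℂ)
    (hV : (∑ g : G, V'.ρ (g * n * g⁻¹)) = c • (1 : V'.V →ₗ[ℂ] V'.V)) :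
    (∑ g : G, (FDRep.of (Representation.tprod P.ρ V'.ρ)).ρ (g * n * g⁻¹))
      = c • (1 : (FDRep.of (Representation.tprod P.ρ V'.ρ)).V →ₗ[ℂ] (FDRep.of (Representation.tprod P.ρ V'.ρ)).V) := by
  have h1 : ∀ g : G, (FDRep.of (Representation.tprod P.ρ V'.ρ)).ρ (g * n * g⁻¹)
      = LinearMap.lTensor P.V (V'.ρ (g * n * g⁻¹)) := by
    intro g
    show (Representation.tprod P.ρ V'.ρ) (g * n * g⁻¹) = _
    rw [Representation.tprod_apply, hP g]
    rw [Module.End.one_eq_id]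
    rfl
  rw [Finset.sum_congr rfl fun g _ => h1 g]
  have h2 : (∑ g : G, LinearMap.lTensor (R := ℂ) P.V (V'.ρ (g * n * g⁻¹)))
      = LinearMap.lTensor P.V (∑ g : G, V'.ρ (g * n * g⁻¹)) := by
    exact (_root_.map_sum (LinearMap.lTensorHom (R := ℂ) (M := P.V) (N := V'.V) (P := V'.V))
      (fun g : G => V'.ρ (g * n * g⁻¹)) Finset.univ).symm
  rw [h2, hV, LinearMap.lTensor_smul, Module.End.one_eq_id, LinearMap.lTensor_id]
  rfl



end McKayAux

open McKayAux CategoryTheory Module FDRep in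
/-- If there is a walk from the vertex of `χᵢ` to the vertex of `χⱼ` in the McKay quiver of
`ρ` (i.e. `⟨χ_ρ^L · χᵢ, χⱼ⟩ ≥ 1` for some `L ≥ 0`), then the restrictions of the
irreducible characters `χᵢ` and `χⱼ` to `N = ker ρ` are proportional. -/
theorem mckay_proportional_restriction_of_walk (G : Type) [Group G] [Fintype G]
    (ρ : FDRep ℂ G) (χi χj : G → ℂ) (hχi : IsIrrChar G χi) (hχj : IsIrrChar G χj)
    (hwalk : ∃ L : ℕ, 1 ≤ innChar G (ρ.character ^ L * χi) χj) :
    ∃ c : ℂ, ∀ n : G, ρ.ρ n = 1 → χi n = c * χj n := by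
  obtain ⟨V, hVs, hVc⟩ := hχi
  obtain ⟨W, hWs, hWc⟩ := hχj
  haveI := hVs
  haveI := hWs
  obtain ⟨L, hL⟩ := hwalk
  have hcard0 : (Fintype.card G : ℂ) ≠ 0 :=
    (Nat.cast_ne_zero (R := ℂ)).2 Fintype.card_ne_zero
  set X := FDRep.of (Representation.tprod (powRep ρ L).ρ V.ρ) with hXdef
  have hXchar : ∀ g : G, X.character g = (ρ.character g) ^ L * χi g := by
    intro g
    show LinearMap.trace ℂ (TensorProduct ℂ (powRep ρ L).V V.V)
        (TensorProduct.map ((powRep ρ L).ρ g) (V.ρ g)) = _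
    rw [LinearMap.trace_tensorProduct' ((powRep ρ L).ρ g) (V.ρ g)]
    have h12 : LinearMap.trace ℂ _ ((powRep ρ L).ρ g) * LinearMap.trace ℂ _ (V.ρ g)
        = (powRep ρ L).character g * V.character g := rfl
    rw [h12, powRep_char ρ L g, hVc]
  have hj1 : χj 1 ≠ 0 := by rw [← hWc]; exact char_one_ne_zero W
  have hsum : (∑ g : G, W.character g⁻¹ * X.character g) ≠ 0 := by
    have hD : ∀ g : G, W.character g⁻¹ = (starRingEnd ℂ) (W.character g) := by
      intro g
      have := lemD W g⁻¹
      rw [inv_inv] at this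
      exact this
    have he : ∀ g : G, W.character g⁻¹ * X.character g
        = (ρ.character ^ L * χi) g * (starRingEnd ℂ) (χj g) := by
      intro g
      rw [hD g, hWc, hXchar g, mul_comm]
      simp only [Pi.mul_apply, Pi.pow_apply]
    rw [Finset.sum_congr rfl fun g _ => he g]
    have hI : (∑ g : G, (ρ.character ^ L * χi) g * (starRingEnd ℂ) (χj g))
        = (Fintype.card G : ℂ) * innChar G (ρ.character ^ L * χi) χj := by
      rw [innChar, ← mul_assoc, mul_inv_cancel₀ hcard0, one_mul]
    rw [hI]
    apply mul_ne_zero hcard0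
    intro h0
    rw [h0] at hL
    exact (zero_lt_one (α := ℂ)).not_ge hL
  obtain ⟨φ, hφ⟩ := lemC W X hsum
  refine ⟨χi 1 / χj 1, ?_⟩
  intro n hn
  obtain ⟨cV, hcV, hcV2⟩ := lemA V n
  obtain ⟨cW, hcW, hcW2⟩ := lemA W n
  have hP : ∀ g : G, (powRep ρ L).ρ (g * n * g⁻¹) = 1 := by
    intro g
    have hgn : ρ.ρ (g * n * g⁻¹) = 1 := by
      rw [map_mul, map_mul, hn, mul_one, ← map_mul, mul_inv_cancel, map_one]
    exact powRep_triv ρ (g * n * g⁻¹) hgn L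
  have hXsum := lemX (powRep ρ L) V n hP cV hcV
  have heq : cW = cV := lemB φ hφ n cW cV hcW hXsum
  have e1 : (Fintype.card G : ℂ) * χi n = cV * χi 1 := by
    rw [← hVc]; exact hcV2
  have e2 : (Fintype.card G : ℂ) * χj n = cV * χj 1 := by
    rw [← hWc, ← heq]; exact hcW2
  have key : χj 1 * χi n = χi 1 * χj n := by
    have h3 : (Fintype.card G : ℂ) * (χj 1 * χi n) = (Fintype.card G : ℂ) * (χi 1 * χj n) := by
      linear_combination χj 1 * e1 - χi 1 * e2
    exact mul_left_cancel₀ hcard0 h3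
  field_simp
  linear_combination key
end

section
/- Let G be a finite group, ρ a finite-dimensional complex representation of G with character χ_ρ, and λ a one-dimensional irreducible character of G. Then there is a bijection e of Irr(G) given by e(χ) = λ·χ satisfying ⟨χ_ρ · χ_i, χ_j⟩ = ⟨χ_ρ · e(χ_i), e(χ_j)⟩ for all irreducible characters χ_i, χ_j, which sends the trivial character to λ; consequently e restricts to an isomorphism from the connected component of the McKay quiver containing the trivial character (the principal component) onto the connected component containing λ. In particular, any connected component of the McKay quiver containing a vertex corresponding to a one-dimensional representation is isomorphic to the principal component. -/
open scoped ComplexOrder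

open CategoryTheory

namespace McKayAux

noncomputable section

/-- Simplicity transfers along an equivalence's functor. -/
theorem simple_obj_of_equiv {C D : Type*} [Category C] [Category D]
    [Limits.HasZeroMorphisms C] [Limits.HasZeroMorphisms D]
    (F : C ⥤ D) [F.IsEquivalence] [F.PreservesZeroMorphisms]
    (X : C) [Simple X] : Simple (F.obj X) := by
  constructor
  intro Y f m
  set eY : F.obj (F.objPreimage Y) ≅ Y := F.objObjPreimageIso Y with heY
  set g : F.objPreimage Y ⟶ X := F.preimage (eY.hom ≫ f) with hgdef
  have hg : F.map g = eY.hom ≫ f := F.map_preimage _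
  have hmono : Mono (F.map g) := by rw [hg]; exact mono_comp _ _
  have : Mono g := F.mono_of_mono_map hmono
  have h1 : IsIso f ↔ IsIso g := by
    constructor
    · intro h
      have : IsIso (F.map g) := by rw [hg]; infer_instance
      exact isIso_of_fully_faithful F g
    · intro h
      have : IsIso (F.map g) := inferInstance
      rw [hg] at this
      have : f = eY.inv ≫ (eY.hom ≫ f) := by simp
      rw [this]; infer_instance
  have h2 : f ≠ 0 ↔ g ≠ 0 := by
    rw [not_iff_not]
    constructor
    · intro h
      apply F.map_injective
      rw [hg, h, F.map_zero, Limits.comp_zero]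
    · intro h
      have : F.map g = 0 := by rw [h, F.map_zero]
      rw [hg] at this
      have : eY.inv ≫ (eY.hom ≫ f) = eY.inv ≫ 0 := by rw [this]
      simpa using this
  rw [h1, h2]
  exact Simple.mono_isIso_iff_nonzero g

variable {G : Type} [Group G]

/-- Twist a representation by a one-dimensional character valued in units. -/
def twistRep (μ : G →* ℂˣ) (V : FDRep ℂ G) : Representation ℂ G V where
  toFun g := (μ g : ℂ) • V.ρ g
  map_one' := by simp
  map_mul' g h := by
    show (μ (g * h) : ℂ) • V.ρ (g * h) = ((μ g : ℂ) • V.ρ g) * ((μ h : ℂ) • V.ρ h)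
    rw [map_mul, map_mul, Units.val_mul, smul_mul_assoc, mul_smul_comm, smul_smul]

/-- The twisted object. -/
def twist (μ : G →* ℂˣ) (V : FDRep ℂ G) : FDRep ℂ G := FDRep.of (twistRep μ V)

lemma twist_ρ (μ : G →* ℂˣ) (V : FDRep ℂ G) (g : G) :
    (twist μ V).ρ g = (μ g : ℂ) • V.ρ g := rfl

/-- The twisting functor. -/
def twistFunctor (μ : G →* ℂˣ) : FDRep ℂ G ⥤ FDRep ℂ G where
  obj V := twist μ V
  map {X Y} f :=
    { hom := f.hom
      comm := fun g => by
        ext x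
        have h := congrArg (fun t => t.hom.hom x) (f.comm g)
        change f.hom.hom.hom (((μ g : ℂ) • X.ρ g) x) = ((μ g : ℂ) • Y.ρ g) (f.hom.hom.hom x)
        change f.hom.hom.hom ((μ g : ℂ) • X.ρ g x) = (μ g : ℂ) • Y.ρ g (f.hom.hom.hom x)
        rw [map_smul]
        exact congrArg (fun t => (μ g : ℂ) • t) h }
  map_id X := rfl
  map_comp f g := rfl

lemma char_twist (μ : G →* ℂˣ) (V : FDRep ℂ G) (g : G) :
    (twist μ V).character g = (μ g : ℂ) * V.character g := by
  show LinearMap.trace ℂ _ ((twistRep μ V) g) = _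
  show LinearMap.trace ℂ _ ((μ g : ℂ) • V.ρ g) = _
  rw [map_smul, smul_eq_mul]
  rfl

/-- The twisting equivalence. -/
def twistEquiv (μ : G →* ℂˣ) : FDRep ℂ G ≌ FDRep ℂ G where
  functor := twistFunctor μ
  inverse := twistFunctor μ⁻¹
  unitIso := NatIso.ofComponents (fun X =>
    Action.mkIso (Iso.refl _) (fun g => by
      simp only [Iso.refl_hom, Category.comp_id, Category.id_comp, Functor.id_obj,
        Functor.comp_obj]
      ext x
      change X.ρ g x = ((μ⁻¹ g : ℂ) • (μ g : ℂ) • X.ρ g) x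
      rw [smul_smul]
      simp)) (fun f => by
      ext
      simp [twistFunctor]
      rfl)
  counitIso := NatIso.ofComponents (fun X =>
    Action.mkIso (Iso.refl _) (fun g => by
      simp only [Iso.refl_hom, Category.comp_id, Category.id_comp, Functor.id_obj,
        Functor.comp_obj]
      ext x
      change ((μ g : ℂ) • (μ⁻¹ g : ℂ) • X.ρ g) x = X.ρ g x
      rw [smul_smul]
      simp)) (fun f => by
      ext
      simp [twistFunctor]
      rfl)
  functor_unitIso_comp X := by
    ext
    simp [twistFunctor]
    rfl

instance (μ : G →* ℂˣ) : (twistFunctor μ).IsEquivalence :=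
  (twistEquiv μ).isEquivalence_functor

instance (μ : G →* ℂˣ) : (twistFunctor μ).PreservesZeroMorphisms where
  map_zero X Y := by
    ext
    rfl

theorem simple_twist (μ : G →* ℂˣ) (V : FDRep ℂ G) [Simple V] : Simple (twist μ V) :=
  simple_obj_of_equiv (twistFunctor μ) V

end
end McKayAux

namespace McKayAux

noncomputable section

variable {G : Type} [Group G]

lemma char_mul_of_finrank_one (W : FDRep ℂ G) (h1 : Module.finrank ℂ W = 1) (g h : G) :
    W.character (g * h) = W.character g * W.character h := by
  have hnt : Nontrivial W := Module.nontrivial_of_finrank_eq_succ h1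
  have hEnd : Module.finrank ℂ (W →ₗ[ℂ] W) = 1 := by
    rw [Module.finrank_linearMap, h1, mul_one]
  have hid : (LinearMap.id : W →ₗ[ℂ] W) ≠ 0 := by
    intro hcon
    obtain ⟨x, y, hxy⟩ := exists_pair_ne W
    apply hxy
    have hx := congrArg (fun f : W →ₗ[ℂ] W => f x) hcon
    have hy := congrArg (fun f : W →ₗ[ℂ] W => f y) hcon
    simp at hx hy
    rw [hx, hy]
  have hsc : ∀ f : W →ₗ[ℂ] W, ∃ c : ℂ, c • (LinearMap.id : W →ₗ[ℂ] W) = f :=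
    (finrank_eq_one_iff_of_nonzero' _ hid).mp hEnd
  have tr : ∀ c : ℂ, LinearMap.trace ℂ W (c • (LinearMap.id : W →ₗ[ℂ] W)) = c := by
    intro c
    rw [map_smul, LinearMap.trace_id, h1]
    simp
  obtain ⟨a, ha⟩ := hsc (W.ρ g)
  obtain ⟨b, hb⟩ := hsc (W.ρ h)
  have hgh : W.ρ (g * h) = (a * b) • (LinearMap.id : W →ₗ[ℂ] W) := by
    rw [map_mul, ← ha, ← hb, smul_mul_assoc, mul_smul_comm, smul_smul]
    congr 1
  show LinearMap.trace ℂ W (W.ρ (g * h)) = LinearMap.trace ℂ W (W.ρ g) * LinearMap.trace ℂ W (W.ρ h)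
  rw [hgh, ← ha, ← hb, tr, tr, tr]

lemma conj_mul_self_of_pow_eq_one {z : ℂ} {n : ℕ} (h : z ^ n = 1) (hn : n ≠ 0) :
    (starRingEnd ℂ) z * z = 1 := by
  have hnorm : ‖z‖ = 1 := Complex.norm_eq_one_of_pow_eq_one h hn
  have := Complex.mul_conj z
  rw [mul_comm] at this
  rw [this, Complex.normSq_eq_norm_sq, hnorm]
  norm_num

lemma eqvGen_equiv_iff {α : Type*} (f : α ≃ α) (r : α → α → Prop)
    (h : ∀ a b, r a b ↔ r (f a) (f b)) (a b : α) :
    Relation.EqvGen r a b ↔ Relation.EqvGen r (f a) (f b) := by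
  have key : ∀ u v, Relation.EqvGen r u v → Relation.EqvGen r (f.symm u) (f.symm v) := by
    intro u v huv
    induction huv with
    | rel x y hxy =>
      refine Relation.EqvGen.rel _ _ ((h _ _).mpr ?_)
      simpa using hxy
    | refl x => exact Relation.EqvGen.refl _
    | symm x y _ ih => exact Relation.EqvGen.symm _ _ ih
    | trans x y z _ _ ih1 ih2 => exact Relation.EqvGen.trans _ _ _ ih1 ih2
  constructor
  · intro hab
    induction hab with
    | rel x y hxy => exact Relation.EqvGen.rel _ _ ((h x y).mp hxy)
    | refl x => exact Relation.EqvGen.refl _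
    | symm x y _ ih => exact Relation.EqvGen.symm _ _ ih
    | trans x y z _ _ ih1 ih2 => exact Relation.EqvGen.trans _ _ _ ih1 ih2
  · intro hab
    have := key _ _ hab
    simpa using this

end

end McKayAux

/-- For a one-dimensional irreducible character `λ` of `G`, multiplication by `λ` is a
bijection `e` of `Irr(G)` preserving the McKay matrix entries and sending the trivial
character to `λ`; consequently `e` restricts to an isomorphism from the principal component
of the McKay quiver (the component of the trivial character) onto the component of `λ`.
In particular any component containing a one-dimensional character is isomorphic to the
principal component. -/
theorem component_with_one_dimensional_char (G : Type) [Group G] [Fintype G]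
    (Irr : Finset (G → ℂ)) (hIrr : ∀ χ, χ ∈ Irr ↔ IsIrrChar G χ)
    (ρ : FDRep ℂ G)
    (htriv : (fun _ : G => (1 : ℂ)) ∈ Irr)
    (lam : G → ℂ) (hlam : lam ∈ Irr) (hdeg : lam 1 = 1) :
    ∃ e : ↑Irr → ↑Irr, Function.Bijective e ∧
      (∀ i : ↑Irr, (↑(e i) : G → ℂ) = fun g => lam g * (↑i : G → ℂ) g) ∧
      (∀ i j : ↑Irr, innChar G (ρ.character * ↑i) ↑j
        = innChar G (ρ.character * ↑(e i)) ↑(e j)) ∧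
      e ⟨fun _ => 1, htriv⟩ = ⟨lam, hlam⟩ ∧
      (∀ i : ↑Irr,
        Relation.EqvGen (fun a b : ↑Irr => 1 ≤ innChar G (ρ.character * ↑a) ↑b)
          ⟨fun _ => 1, htriv⟩ i ↔
        Relation.EqvGen (fun a b : ↑Irr => 1 ≤ innChar G (ρ.character * ↑a) ↑b)
          ⟨lam, hlam⟩ (e i)) := by
  classical
  obtain ⟨W, hWs, hWc⟩ := (hIrr lam).mp hlam
  have hfr : Module.finrank ℂ W = 1 := by
    have h := FDRep.char_one W
    rw [hWc, hdeg] at h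
    exact_mod_cast h.symm
  have hmul : ∀ g h : G, lam (g * h) = lam g * lam h := by
    intro g h
    rw [← hWc]
    exact McKayAux.char_mul_of_finrank_one W hfr g h
  have hunit : ∀ g : G, lam g * lam g⁻¹ = 1 := by
    intro g
    rw [← hmul]
    simp [hdeg]
  have hunit' : ∀ g : G, lam g⁻¹ * lam g = 1 := by
    intro g
    rw [← hmul]
    simp [hdeg]
  have hne : ∀ g : G, lam g ≠ 0 := fun g => left_ne_zero_of_mul_eq_one (hunit g)
  have hinv_eq : ∀ g : G, lam g⁻¹ = (lam g)⁻¹ := fun g =>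
    (inv_eq_of_mul_eq_one_right (hunit g)).symm
  set lamHom : G →* ℂ := { toFun := lam, map_one' := hdeg, map_mul' := hmul } with hlamHom
  have hconj : ∀ g : G, (starRingEnd ℂ) (lam g) * lam g = 1 := by
    intro g
    have hpow : lam g ^ orderOf g = 1 := by
      have := map_pow lamHom g (orderOf g)
      rw [pow_orderOf_eq_one] at this
      have h1 : lamHom 1 = 1 := hdeg
      rw [h1] at this
      exact this.symm
    exact McKayAux.conj_mul_self_of_pow_eq_one hpow (orderOf_pos g).ne'
  set μ : G →* ℂˣ :=
    { toFun := fun g => Units.mk (lam g) (lam g⁻¹) (hunit g) (hunit' g)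
      map_one' := Units.ext hdeg
      map_mul' := fun g h => Units.ext (hmul g h) } with hμ
  have memMul : ∀ (ν : G →* ℂˣ), ∀ χ ∈ Irr, (fun g => (ν g : ℂ) * χ g) ∈ Irr := by
    intro ν χ hχ
    obtain ⟨V, hVs, hVc⟩ := (hIrr χ).mp hχ
    haveI := hVs
    refine (hIrr _).mpr ⟨McKayAux.twist ν V, McKayAux.simple_twist ν V, ?_⟩
    funext g
    rw [McKayAux.char_twist, hVc]
  let eq : ↑Irr ≃ ↑Irr :=
    { toFun := fun i => ⟨fun g => lam g * (i : G → ℂ) g, memMul μ _ i.2⟩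
      invFun := fun i => ⟨fun g => lam g⁻¹ * (i : G → ℂ) g, memMul μ⁻¹ _ i.2⟩
      left_inv := fun i => Subtype.ext (funext fun g => by
        simp only [hinv_eq g]
        exact inv_mul_cancel_left₀ (hne g) _)
      right_inv := fun i => Subtype.ext (funext fun g => by
        simp only [hinv_eq g]
        exact mul_inv_cancel_left₀ (hne g) _) }
  have hcoe : ∀ i : ↑Irr, (↑(eq i) : G → ℂ) = fun g => lam g * (↑i : G → ℂ) g := fun i => rfl
  have hinner : ∀ i j : ↑Irr, innChar G (ρ.character * ↑i) ↑j
      = innChar G (ρ.character * ↑(eq i)) ↑(eq j) := by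
    intro i j
    unfold innChar
    congr 1
    refine Finset.sum_congr rfl fun g _ => ?_
    rw [hcoe i, hcoe j]
    simp only [Pi.mul_apply, map_mul]
    have hcg := hconj g
    linear_combination (-(ρ.character g * (↑i : G → ℂ) g * (starRingEnd ℂ) ((↑j : G → ℂ) g))) * hcg
  have htrivmap : eq ⟨fun _ => 1, htriv⟩ = ⟨lam, hlam⟩ :=
    Subtype.ext (funext fun g => mul_one _)
  refine ⟨eq, eq.bijective, hcoe, hinner, htrivmap, ?_⟩
  intro i
  have hkey : ∀ a b : ↑Irr,
      (1 ≤ innChar G (ρ.character * ↑a) ↑b) ↔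
      (1 ≤ innChar G (ρ.character * ↑(eq a)) ↑(eq b)) := by
    intro a b
    rw [hinner a b]
  have h := McKayAux.eqvGen_equiv_iff eq
    (fun a b : ↑Irr => 1 ≤ innChar G (ρ.character * ↑a) ↑b) hkey ⟨fun _ => 1, htriv⟩ i
  rw [htrivmap] at h
  exact h
end

section
/- Let G be a finite group and ρ a finite-dimensional complex representation of G. Then every complex eigenvalue x of the McKay matrix A_ρ(G) (viewed as a matrix over ℂ) is solvable by radicals over ℚ; in particular, x lies in the cyclotomic field generated over ℚ by the |G|-th roots of unity, and the characteristic polynomial of A_ρ(G) is solvable by radicals. -/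
set_option linter.unusedSectionVars false

section Aux1

open Module Polynomial FDRep CategoryTheory

section Spectral

variable {V : Type} [AddCommGroup V] [Module ℂ V] [FiniteDimensional ℂ V]

lemma pow_apply_eigen (f : Module.End ℂ V) (μ : ℂ) (x : V) (hx : f x = μ • x) (k : ℕ) :
    (f ^ k) x = μ ^ k • x := by
  induction k with
  | zero => simp
  | succ k ih =>
    rw [pow_succ', Module.End.mul_apply, ih, map_smul, hx, smul_smul, pow_succ', mul_comm]

lemma trace_pow_of_pow_eq_one {f : Module.End ℂ V} {n : ℕ} (hn : n ≠ 0) (hf : f ^ n = 1) :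
    ∃ (s : Finset ℂ) (d : ℂ → ℕ), (∀ μ ∈ s, μ ^ n = 1) ∧
      ∀ k : ℕ, LinearMap.trace ℂ V (f ^ k) = ∑ μ ∈ s, (d μ : ℂ) * μ ^ k := by
  have hss : f.IsSemisimple := by
    apply Module.End.isSemisimple_of_squarefree_aeval_eq_zero
      (p := X ^ n - C 1)
    · exact (Polynomial.separable_X_pow_sub_C (1 : ℂ)
        (by exact_mod_cast (Nat.cast_ne_zero (R := ℂ)).mpr hn) one_ne_zero).squarefree
    · simp [map_pow, hf]
  have hFSS := hss.isFinitelySemisimple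
  have htop : ⨆ μ : ℂ, f.eigenspace μ = ⊤ := by
    have h1 := Module.End.iSup_maxGenEigenspace_eq_top f
    simp_rw [hFSS.maxGenEigenspace_eq_eigenspace] at h1
    exact h1
  have hind := f.eigenspaces_iSupIndep
  have hint : DirectSum.IsInternal (fun μ : ℂ => f.eigenspace μ) :=
    DirectSum.isInternal_submodule_of_iSupIndep_of_iSup_eq_top hind htop
  have hfin : {μ : ℂ | f.eigenspace μ ≠ ⊥}.Finite :=
    WellFoundedGT.finite_ne_bot_of_iSupIndep hind
  have hmap : ∀ (k : ℕ) (μ : ℂ), Set.MapsTo (f ^ k) (f.eigenspace μ) (f.eigenspace μ) := by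
    intro k μ x hx
    rw [SetLike.mem_coe, Module.End.mem_eigenspace_iff] at hx ⊢
    rw [pow_apply_eigen f μ x hx k, map_smul,  hx, smul_smul, smul_smul, mul_comm]
  refine ⟨hfin.toFinset, fun μ => finrank ℂ (f.eigenspace μ), ?_, ?_⟩
  · intro μ hμ
    rw [Set.Finite.mem_toFinset] at hμ
    obtain ⟨x, hx, hx0⟩ := Submodule.exists_mem_ne_zero_of_ne_bot hμ
    rw [Module.End.mem_eigenspace_iff] at hx
    have h1 : (f ^ n) x = μ ^ n • x := pow_apply_eigen f μ x hx n
    rw [hf] at h1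
    have h2 : (μ ^ n - 1) • x = 0 := by
      rw [sub_smul, one_smul, ← h1]; simp
    rcases smul_eq_zero.mp h2 with h | h
    · linear_combination h
    · exact absurd h hx0
  · intro k
    rw [LinearMap.trace_eq_sum_trace_restrict' hint hfin (hmap k)]
    refine Finset.sum_congr rfl fun μ _ => ?_
    have hres : (f ^ k).restrict (hmap k μ) = (μ ^ k) • LinearMap.id := by
      ext x
      have := pow_apply_eigen f μ x.1 (Module.End.mem_eigenspace_iff.mp x.2) k
      exact this
    rw [hres, map_smul, LinearMap.trace_id, smul_eq_mul, mul_comm]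

end Spectral

variable {G : Type} [Group G] [Fintype G]

lemma char_spectral (W : FDRep ℂ G) (g : G) :
    ∃ (s : Finset ℂ) (d : ℂ → ℕ), (∀ μ ∈ s, μ ^ Fintype.card G = 1) ∧
      ∀ k : ℕ, W.character (g ^ k) = ∑ μ ∈ s, (d μ : ℂ) * μ ^ k := by
  have hf : (W.ρ g) ^ Fintype.card G = 1 := by
    rw [← map_pow, pow_card_eq_one, map_one]
  obtain ⟨s, d, h1, h2⟩ := trace_pow_of_pow_eq_one Fintype.card_ne_zero hf
  exact ⟨s, d, h1, fun k => by simpa [FDRep.character, map_pow] using h2 k⟩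

lemma char_mem_cyclotomic (W : FDRep ℂ G) (g : G) :
    W.character g ∈ IntermediateField.adjoin ℚ {z : ℂ | z ^ Fintype.card G = 1} := by
  obtain ⟨s, d, h1, h2⟩ := char_spectral W g
  have := h2 1
  rw [pow_one] at this
  rw [this]
  exact sum_mem fun μ hμ => mul_mem (natCast_mem _ _)
    (by rw [pow_one]; exact IntermediateField.subset_adjoin ℚ _ (h1 μ hμ))

lemma conj_of_pow_eq_one {μ : ℂ} {n : ℕ} (hn : n ≠ 0) (h : μ ^ n = 1) :
    (starRingEnd ℂ) μ = μ ^ (n - 1) := by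
  have hnorm : ‖μ‖ = 1 := Complex.norm_eq_one_of_pow_eq_one h hn
  have h2 : μ * (starRingEnd ℂ) μ = 1 := by
    rw [Complex.mul_conj]
    norm_cast
    rw [Complex.normSq_eq_norm_sq, hnorm, one_pow]
  have hne : μ ≠ 0 := by
    intro h0; rw [h0, zero_mul] at h2; exact zero_ne_one h2
  have h3 : μ * μ ^ (n - 1) = 1 := by
    rw [← pow_succ', Nat.sub_add_cancel (Nat.one_le_iff_ne_zero.mpr hn)]; exact h
  exact mul_left_cancel₀ hne (h2.trans h3.symm)

lemma auxCharConj (W : FDRep ℂ G) (g : G) :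
    W.character g⁻¹ = (starRingEnd ℂ) (W.character g) := by
  obtain ⟨s, d, h1, h2⟩ := char_spectral W g
  have hginv : g⁻¹ = g ^ (Fintype.card G - 1) := by
    symm
    apply eq_inv_of_mul_eq_one_left
    rw [← pow_succ,  Nat.sub_add_cancel (Nat.one_le_iff_ne_zero.mpr Fintype.card_ne_zero)]
    exact pow_card_eq_one
  have e1 := h2 1
  rw [pow_one] at e1
  rw [hginv, h2, e1, map_sum]
  refine Finset.sum_congr rfl fun μ hμ => ?_
  rw [map_mul, pow_one, conj_of_pow_eq_one Fintype.card_ne_zero (h1 μ hμ), map_natCast]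



open scoped Classical in
lemma char_orthonormal'' (V W : FDRep ℂ G) [Simple V] [Simple W] :
    (Fintype.card G : ℂ)⁻¹ * ∑ g : G, V.character g * W.character g⁻¹ =
      if Nonempty (V ≅ W) then 1 else 0 := by
  have h := FDRep.char_orthonormal V W
  rw [Nat.card_eq_fintype_card] at h
  exact h

lemma inn_char_eq [DecidableEq (G → ℂ)] (i j : G → ℂ) (hi : IsIrrChar G i) (hj : IsIrrChar G j) :
    innChar G i j = if i = j then 1 else 0 := by
  obtain ⟨V, hVs, hVc⟩ := hi
  haveI := hVs
  by_cases hij : i = j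
  · subst hij
    have h := char_orthonormal'' V V
    rw [if_pos ⟨Iso.refl V⟩] at h
    rw [if_pos rfl, innChar, ← hVc, ← h]
    congr 1
    exact Finset.sum_congr rfl fun g _ => by rw [← auxCharConj V g]
  · obtain ⟨W, hWs, hWc⟩ := hj
    haveI := hWs
    have h := char_orthonormal'' V W
    rw [if_neg (fun ⟨e⟩ => hij (hVc ▸ hWc ▸ FDRep.char_iso e))] at h
    rw [if_neg hij, innChar, ← hVc, ← hWc, ← h]
    congr 1
    exact Finset.sum_congr rfl fun g _ => by rw [← auxCharConj W g]

/-- Restriction of a representation to an invariant subspace. -/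
def resRep {V : Type} [AddCommGroup V] [Module ℂ V] (ρ : Representation ℂ G V)
    (U : Submodule ℂ V) (hU : ∀ g : G, ∀ x ∈ U, ρ g x ∈ U) : Representation ℂ G U where
  toFun g := (ρ g).restrict (fun x hx => hU g x hx)
  map_one' := by ext x; simp [LinearMap.restrict_apply]
  map_mul' g h := by ext x; simp [LinearMap.restrict_apply]

lemma exists_invariant_compl [Fintype G] {V : Type} [AddCommGroup V] [Module ℂ V]
    (ρ : Representation ℂ G V) (U : Submodule ℂ V) (hU : ∀ g : G, ∀ x ∈ U, ρ g x ∈ U) :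
    ∃ U' : Submodule ℂ V, IsCompl U U' ∧ ∀ g : G, ∀ x ∈ U', ρ g x ∈ U' := by
  obtain ⟨W0, hW0⟩ := Submodule.exists_isCompl U
  set p : V →ₗ[ℂ] V := U.subtype ∘ₗ (U.linearProjOfIsCompl W0 hW0) with hp
  have hpmem : ∀ x : V, p x ∈ U := fun x => (U.linearProjOfIsCompl W0 hW0 x).2
  have hpU : ∀ x ∈ U, p x = x := fun x hx => by
    exact congrArg Subtype.val (Submodule.projectionOnto_apply_left hW0 ⟨x, hx⟩)
  set e : V →ₗ[ℂ] V :=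
    (Fintype.card G : ℂ)⁻¹ • ∑ g : G, (ρ g) ∘ₗ p ∘ₗ (ρ g⁻¹) with he
  have heU : ∀ x, e x ∈ U := by
    intro x
    simp only [he, LinearMap.smul_apply, LinearMap.sum_apply, LinearMap.comp_apply]
    exact Submodule.smul_mem _ _
      (Submodule.sum_mem _ fun g _ => hU g _ (hpmem _))
  have hρρ : ∀ (g h : G) (x : V), ρ g (ρ h x) = ρ (g * h) x := fun g h x => by
    rw [map_mul]; rfl
  have hefix : ∀ x ∈ U, e x = x := by
    intro x hx
    have hterm : ∀ g : G, ρ g (p (ρ g⁻¹ x)) = x := fun g => by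
      rw [hpU _ (hU g⁻¹ x hx), hρρ, mul_inv_cancel, map_one]; rfl
    simp only [he, LinearMap.smul_apply, LinearMap.sum_apply, LinearMap.comp_apply, hterm]
    rw [Finset.sum_const, Finset.card_univ, ← Nat.cast_smul_eq_nsmul ℂ, smul_smul,
      inv_mul_cancel₀ (Nat.cast_ne_zero.mpr Fintype.card_ne_zero), one_smul]
  have hecomm : ∀ (h : G) (x : V), e (ρ h x) = ρ h (e x) := by
    intro h x
    simp only [he, LinearMap.smul_apply, LinearMap.sum_apply, LinearMap.comp_apply, map_smul,
      map_sum]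
    congr 1
    rw [← Equiv.sum_comp (Equiv.mulLeft h) (fun g => ρ g (p (ρ g⁻¹ (ρ h x))))]
    refine Finset.sum_congr rfl fun g _ => ?_
    simp only [Equiv.coe_mulLeft]
    rw [hρρ (h*g)⁻¹ h, show (h*g)⁻¹ * h = g⁻¹ by group, hρρ h g]
  refine ⟨LinearMap.ker e, ⟨?_, ?_⟩, ?_⟩
  · rw [Submodule.disjoint_def]
    intro x hxU hxK
    rw [LinearMap.mem_ker] at hxK
    rw [← hefix x hxU, hxK]
  · rw [codisjoint_iff_le_sup]
    intro x _
    have h1 : x - e x ∈ LinearMap.ker e := by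
      rw [LinearMap.mem_ker, map_sub, hefix _ (heU x), sub_self]
    exact Submodule.mem_sup.mpr ⟨e x, heU x, x - e x, h1, by abel⟩
  · intro g x hx
    rw [LinearMap.mem_ker] at hx ⊢
    rw [hecomm, hx, map_zero]

lemma simple_of_irred {Uty : Type} [AddCommGroup Uty] [Module ℂ Uty] [FiniteDimensional ℂ Uty]
    [Nontrivial Uty] (θ : Representation ℂ G Uty)
    (hirr : ∀ T : Submodule ℂ Uty, (∀ g : G, ∀ x ∈ T, θ g x ∈ T) → T = ⊥ ∨ T = ⊤) :
    CategoryTheory.Simple (FDRep.of θ) := by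
  constructor
  intro Y f hmono
  constructor
  · -- IsIso f → f ≠ 0
    intro hiso hf0
    have hid : 𝟙 (FDRep.of θ) = (0 : FDRep.of θ ⟶ FDRep.of θ) := by
      calc 𝟙 (FDRep.of θ) = inv f ≫ f := (IsIso.inv_hom_id f).symm
        _ = inv f ≫ 0 := congrArg (fun t => inv f ≫ t) hf0
        _ = 0 := Limits.comp_zero
    obtain ⟨u, hu⟩ := exists_ne (0 : Uty)
    have h2 := congrArg
      (fun (m : FDRep.of θ ⟶ FDRep.of θ) => (m.hom.hom.hom : Uty →ₗ[ℂ] Uty) u) hid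
    simp at h2
    exact hu h2
  · -- f ≠ 0 → IsIso f
    intro hf0
    set φ : ↑Y →ₗ[ℂ] Uty := (f.hom.hom.hom : ↑Y →ₗ[ℂ] Uty) with hφ
    have hcomm : ∀ (g : G) (y : Y), φ (Y.ρ g y) = θ g (φ y) := fun g y =>
      congrFun (congrArg (fun (l : Y.V ⟶ (FDRep.of θ).V) => (l.hom.hom : ↑Y → Uty)) (f.comm g)) y
    -- surjectivity
    have hrange : LinearMap.range φ = ⊤ := by
      have hinv : ∀ g : G, ∀ x ∈ LinearMap.range φ, θ g x ∈ LinearMap.range φ := by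
        rintro g x ⟨y, rfl⟩
        exact ⟨Y.ρ g y, hcomm g y⟩
      rcases hirr (LinearMap.range φ) hinv with h | h
      · exact absurd (Action.Hom.ext (FGModuleCat.hom_ext (LinearMap.range_eq_bot.mp h))) hf0
      · exact h
    -- injectivity from Mono
    have hker : LinearMap.ker φ = ⊥ := by
      by_contra hk
      obtain ⟨x, hx, hx0⟩ := Submodule.exists_mem_ne_zero_of_ne_bot hk
      have hKinv : ∀ g : G, ∀ z ∈ LinearMap.ker φ, Y.ρ g z ∈ LinearMap.ker φ := by
        intro g z hz
        rw [LinearMap.mem_ker] at hz ⊢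
        rw [hcomm, hz, map_zero]
      let Z : FDRep ℂ G := FDRep.of (resRep Y.ρ (LinearMap.ker φ) hKinv)
      let ι : Z ⟶ Y := ⟨FGModuleCat.ofHom ((LinearMap.ker φ).subtype : ↥(LinearMap.ker φ) →ₗ[ℂ] ↑Y), by
        intro g; ext z; rfl⟩
      have hcomp : ι ≫ f = (0 : Z ⟶ Y) ≫ f := by
        rw [Limits.zero_comp]
        apply Action.Hom.ext
        apply FGModuleCat.hom_ext
        apply LinearMap.ext
        intro z
        have hz := LinearMap.mem_ker.mp z.2
        show (f.hom.hom.hom : ↑Y →ₗ[ℂ] Uty) (((LinearMap.ker φ).subtype) z) = 0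
        exact hz
      have hι0 := (cancel_mono f).mp hcomp
      have h2 := congrArg
        (fun (m : Z ⟶ Y) => (m.hom.hom.hom : ↥(LinearMap.ker φ) →ₗ[ℂ] ↑Y) ⟨x, hx⟩) hι0
      simp [ι, Z] at h2
      exact hx0 h2
    -- build inverse
    have hbij : Function.Bijective φ :=
      ⟨LinearMap.ker_eq_bot.mp hker, LinearMap.range_eq_top.mp hrange⟩
    let eqv : ↑Y ≃ₗ[ℂ] Uty := LinearEquiv.ofBijective φ hbij
    have hsymm : ∀ (g : G) (u : Uty), eqv.symm (θ g u) = Y.ρ g (eqv.symm u) := by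
      intro g u
      apply eqv.injective
      rw [LinearEquiv.apply_symm_apply]
      show θ g u = φ (Y.ρ g (eqv.symm u))
      rw [hcomm g (eqv.symm u)]
      congr 1
      exact (eqv.apply_symm_apply u).symm
    let ginv : FDRep.of θ ⟶ Y := ⟨FGModuleCat.ofHom (eqv.symm.toLinearMap : Uty →ₗ[ℂ] ↑Y), by
      intro g
      apply FGModuleCat.hom_ext
      apply LinearMap.ext
      intro u
      show eqv.symm (θ g u) = Y.ρ g (eqv.symm u)
      exact hsymm g u⟩
    refine ⟨⟨ginv, ?_, ?_⟩⟩
    · apply Action.Hom.ext; apply FGModuleCat.hom_ext; apply LinearMap.ext; intro y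
      show eqv.symm (φ y) = y
      exact eqv.symm_apply_apply y
    · apply Action.Hom.ext; apply FGModuleCat.hom_ext; apply LinearMap.ext; intro u
      show φ (eqv.symm u) = u
      exact eqv.apply_symm_apply u

lemma resRep_coe {V : Type} [AddCommGroup V] [Module ℂ V] (ρ : Representation ℂ G V)
    (U : Submodule ℂ V) (hU : ∀ g : G, ∀ x ∈ U, ρ g x ∈ U) (g : G) (y : U) :
    (resRep ρ U hU g y : V) = ρ g (y : V) := rfl

lemma trace_isCompl {V : Type} [AddCommGroup V] [Module ℂ V] [FiniteDimensional ℂ V]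
    (f : V →ₗ[ℂ] V) {U U' : Submodule ℂ V} (h : IsCompl U U')
    (hU : Set.MapsTo f U U) (hU' : Set.MapsTo f U' U') :
    LinearMap.trace ℂ V f =
      LinearMap.trace ℂ U (f.restrict hU) + LinearMap.trace ℂ U' (f.restrict hU') := by
  set N : Bool → Submodule ℂ V := fun b => cond b U U' with hN
  have hint : DirectSum.IsInternal N :=
    (DirectSum.isInternal_submodule_iff_isCompl N
      (i := true) (j := false) (by simp) (by ext b; cases b <;> simp)).mpr h
  have hmap : ∀ b : Bool, Set.MapsTo f (N b) (N b) := by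
    intro b; cases b
    · exact hU'
    · exact hU
  rw [LinearMap.trace_eq_sum_trace_restrict hint hmap, Fintype.sum_bool]
  rfl

/-- Existence of an irreducible invariant subspace. -/
lemma exists_irreducible_sub {V : Type} [AddCommGroup V] [Module ℂ V] [FiniteDimensional ℂ V]
    (ρ : Representation ℂ G V) (hV : Nontrivial V) :
    ∃ (U : Submodule ℂ V) (hUinv : ∀ g : G, ∀ x ∈ U, ρ g x ∈ U), U ≠ ⊥ ∧
      (∀ T : Submodule ℂ ↥U,
        (∀ g : G, ∀ x ∈ T, resRep ρ U hUinv g x ∈ T) → T = ⊥ ∨ T = ⊤) := by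
  classical
  set P : ℕ → Prop := fun m =>
    ∃ (U : Submodule ℂ V) (_ : ∀ g : G, ∀ x ∈ U, ρ g x ∈ U), U ≠ ⊥ ∧ finrank ℂ U = m with hP
  have hPex : ∃ m, P m :=
    ⟨finrank ℂ (⊤ : Submodule ℂ V), ⊤, fun g x _ => trivial, top_ne_bot, rfl⟩
  obtain ⟨U, hUinv, hUne, hUrank⟩ := Nat.find_spec hPex
  refine ⟨U, hUinv, hUne, ?_⟩
  intro T hTinv
  by_cases hT : T = ⊥
  · exact Or.inl hT
  right
  set T' : Submodule ℂ V := T.map U.subtype with hT'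
  have hT'ne : T' ≠ ⊥ := by
    obtain ⟨x, hx, hx0⟩ := Submodule.exists_mem_ne_zero_of_ne_bot hT
    intro hbot
    have : (x : V) ∈ T' := Submodule.mem_map_of_mem hx
    rw [hbot, Submodule.mem_bot] at this
    exact hx0 (Subtype.ext this)
  have hT'inv : ∀ g : G, ∀ x ∈ T', ρ g x ∈ T' := by
    rintro g x ⟨y, hy, rfl⟩
    exact ⟨resRep ρ U hUinv g y, hTinv g y hy, resRep_coe ρ U hUinv g y⟩
  have hP' : P (finrank ℂ T') := ⟨T', hT'inv, hT'ne, rfl⟩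
  have hge : finrank ℂ U ≤ finrank ℂ T' := by
    rw [hUrank]
    exact Nat.find_le hP'
  have heq : finrank ℂ T = finrank ℂ ↥U := by
    have h1 : finrank ℂ T' = finrank ℂ T := Submodule.finrank_map_subtype_eq U T
    have h2 : finrank ℂ T ≤ finrank ℂ ↥U := Submodule.finrank_le T
    omega
  exact Submodule.eq_top_of_finrank_eq heq


lemma innChar_add_left (φ₁ φ₂ ψ : G → ℂ) :
    innChar G (fun g => φ₁ g + φ₂ g) ψ = innChar G φ₁ ψ + innChar G φ₂ ψ := by
  simp only [innChar, ← mul_add, ← Finset.sum_add_distrib, add_mul]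

lemma stepA [DecidableEq (G → ℂ)] (Irr : Finset (G → ℂ))
    (hIrr : ∀ χ, χ ∈ Irr ↔ IsIrrChar G χ) :
    ∀ (m : ℕ) (W : FDRep ℂ G), finrank ℂ W = m →
      ∀ g : G, ∑ j ∈ Irr, innChar G W.character j * j g = W.character g := by
  intro m
  induction m using Nat.strong_induction_on with
  | _ m ih =>
    intro W hm g
    rcases subsingleton_or_nontrivial W with hs | hn
    · have hchar : W.character = fun _ => 0 := funext fun h => by
        have h0 : W.ρ h = 0 := Subsingleton.elim _ _
        show LinearMap.trace ℂ W (W.ρ h) = 0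
        rw [h0, map_zero]
      rw [hchar]
      simp [innChar]
    · obtain ⟨U, hUinv, hUne, hUirr⟩ := exists_irreducible_sub W.ρ hn
      obtain ⟨U', hcompl, hU'inv⟩ := exists_invariant_compl W.ρ U hUinv
      haveI : Nontrivial ↥U := Submodule.nontrivial_iff_ne_bot.mpr hUne
      set W₁ : FDRep ℂ G := FDRep.of (resRep W.ρ U hUinv) with hW₁
      set W₂ : FDRep ℂ G := FDRep.of (resRep W.ρ U' hU'inv) with hW₂
      have hcharsum : ∀ h : G, W.character h = W₁.character h + W₂.character h := by
        intro h
        exact trace_isCompl (W.ρ h) hcompl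
          (fun x hx => hUinv h x hx) (fun x hx => hU'inv h x hx)
      have hχ₁ : W₁.character ∈ Irr :=
        (hIrr _).mpr ⟨W₁, simple_of_irred _ hUirr, rfl⟩
      have hrank : finrank ℂ ↥W₂ < m := by
        have h1 : finrank ℂ ↥U + finrank ℂ ↥U' = finrank ℂ ↥W :=
          Submodule.finrank_add_eq_of_isCompl hcompl
        have h2 : 0 < finrank ℂ ↥U := Module.finrank_pos_iff.mpr this
        have h3 : finrank ℂ ↥W₂ = finrank ℂ ↥U' := rfl
        omega
      have ih₂ := ih _ hrank W₂ rfl g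
      have horth : ∑ j ∈ Irr, innChar G W₁.character j * j g = W₁.character g := by
        have hcong : ∀ j ∈ Irr, innChar G W₁.character j * j g
            = (if W₁.character = j then (1:ℂ) else 0) * j g := fun j hj => by
          rw [inn_char_eq _ _ ((hIrr _).mp hχ₁) ((hIrr _).mp hj)]
        rw [Finset.sum_congr rfl hcong]
        simp only [ite_mul, one_mul, zero_mul]
        rw [Finset.sum_ite_eq Irr W₁.character (fun j => j g), if_pos hχ₁]
      have hchareq : W.character = fun h => W₁.character h + W₂.character h :=
        funext hcharsum
      calc ∑ j ∈ Irr, innChar G W.character j * j g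
          = ∑ j ∈ Irr, (innChar G W₁.character j * j g + innChar G W₂.character j * j g) := by
            refine Finset.sum_congr rfl fun j hj => ?_
            rw [hchareq, innChar_add_left, add_mul]
        _ = W₁.character g + W₂.character g := by
            rw [Finset.sum_add_distrib, horth, ih₂]
        _ = W.character g := (hcharsum g).symm

end Aux1

section Aux2

open Module FDRep CategoryTheory MonoidalCategory Matrix

lemma eval_charpoly' {m : Type} [Fintype m] [DecidableEq m] (M : Matrix m m ℂ) (x : ℂ) :
    M.charpoly.eval x = (x • (1 : Matrix m m ℂ) - M).det := by
  rw [Matrix.charpoly, ← Polynomial.coe_evalRingHom, RingHom.map_det]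
  congr 1
  ext i j
  by_cases h : i = j
  · subst h
    simp [Matrix.charmatrix_apply_eq, Matrix.sub_apply, Matrix.smul_apply, Matrix.one_apply]
  · simp [Matrix.charmatrix_apply_ne _ _ _ h, Matrix.sub_apply, Matrix.smul_apply,
      Matrix.one_apply, h]


/-- Every complex eigenvalue `x` of the McKay matrix `A_ρ(G)` lies in the cyclotomic field
generated over `ℚ` by the `|G|`-th roots of unity and is solvable by radicals over `ℚ`;
moreover every root of the characteristic polynomial of `A_ρ(G)` is solvable by radicals,
i.e. the characteristic polynomial is solvable by radicals. -/
theorem mckay_matrix_eigenvalues_solvable_by_radicals (G : Type) [Group G] [Fintype G]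
    [DecidableEq (G → ℂ)]
    (Irr : Finset (G → ℂ)) (hIrr : ∀ χ, χ ∈ Irr ↔ IsIrrChar G χ)
    (ρ : FDRep ℂ G) :
    (∀ x : ℂ,
      (∃ v : ↑Irr → ℂ, v ≠ 0 ∧
        (Matrix.of fun i j : ↑Irr => innChar G (ρ.character * ↑i) ↑j).mulVec v = x • v) →
      x ∈ IntermediateField.adjoin ℚ {z : ℂ | z ^ Fintype.card G = 1} ∧
        x ∈ solvableByRad ℚ ℂ) ∧
    (∀ x : ℂ,
      (Matrix.of fun i j : ↑Irr => innChar G (ρ.character * ↑i) ↑j).charpoly.IsRoot x →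
      x ∈ solvableByRad ℚ ℂ) := by
  classical
  set n := Fintype.card G with hn
  have hn0 : (n : ℂ) ≠ 0 := Nat.cast_ne_zero.mpr Fintype.card_ne_zero
  set M : Matrix ↑Irr ↑Irr ℂ :=
    Matrix.of fun i j : ↑Irr => innChar G (ρ.character * ↑i) ↑j with hM
  set Q : Matrix ↑Irr G ℂ := Matrix.of fun (j : ↑Irr) g => (j : G → ℂ) g with hQ
  set Qc : Matrix G ↑Irr ℂ :=
    Matrix.of fun g (j : ↑Irr) => (starRingEnd ℂ) ((j : G → ℂ) g) with hQc
  set D : Matrix G G ℂ := Matrix.diagonal (fun g => ρ.character g) with hD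
  -- M * Q = Q * D
  have hMQD : M * Q = Q * D := by
    ext i g
    rw [Matrix.mul_apply, Matrix.mul_diagonal]
    have hIi := (hIrr ↑i).mp i.2
    obtain ⟨Vi, hVis, hVic⟩ := hIi
    have htens := stepA Irr hIrr _ (ρ ⊗ Vi) rfl g
    have hc : (ρ ⊗ Vi).character = ρ.character * (i : G → ℂ) := by
      rw [FDRep.char_tensor, hVic]
    rw [hc] at htens
    calc ∑ j : ↑Irr, M i j * Q j g
        = ∑ j ∈ Irr, innChar G (ρ.character * ↑i) j * j g := by
          rw [← Finset.sum_coe_sort Irr (fun j => innChar G (ρ.character * ↑i) j * j g)]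
          rfl
      _ = (ρ.character * (i : G → ℂ)) g := htens
      _ = Q i g * ρ.character g := by
          simp [hQ, Pi.mul_apply, mul_comm]
  -- Q * Qc = n • 1
  have hQQc : Q * Qc = (n : ℂ) • (1 : Matrix ↑Irr ↑Irr ℂ) := by
    ext i j
    rw [Matrix.mul_apply]
    have h := inn_char_eq (G := G) (↑i) (↑j) ((hIrr ↑i).mp i.2) ((hIrr ↑j).mp j.2)
    have h2 : ∑ g : G, Q i g * Qc g j = (n : ℂ) * innChar G ↑i ↑j := by
      simp only [innChar]
      rw [← mul_assoc, mul_inv_cancel₀ hn0, one_mul]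
      rfl
    rw [h2, h, Matrix.smul_apply, Matrix.one_apply]
    by_cases hij : i = j
    · rw [if_pos (by rw [hij]), if_pos hij]
      simp
    · rw [if_neg (fun hc => hij (Subtype.ext hc)), if_neg hij]
      simp
  have hQright : Q * ((n : ℂ)⁻¹ • Qc) = 1 := by
    rw [Matrix.mul_smul, hQQc, smul_smul, inv_mul_cancel₀ hn0, one_smul]
  -- eigenvalue extraction
  have key : ∀ x : ℂ, (∃ v : ↑Irr → ℂ, v ≠ 0 ∧ M.mulVec v = x • v) →
      ∃ g : G, x = ρ.character g := by
    rintro x ⟨v, hv0, hMv⟩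
    have hdet : (M - x • 1).det = 0 := by
      rw [← Matrix.exists_mulVec_eq_zero_iff]
      exact ⟨v, hv0, by
        rw [Matrix.sub_mulVec, Matrix.smul_mulVec, Matrix.one_mulVec, hMv, sub_self]⟩
    have hdetT : (Mᵀ - x • 1).det = 0 := by
      rw [show Mᵀ - x • 1 = (M - x • 1)ᵀ by
        rw [Matrix.transpose_sub, Matrix.transpose_smul, Matrix.transpose_one],
        Matrix.det_transpose]
      exact hdet
    obtain ⟨w, hw0, hw⟩ := Matrix.exists_mulVec_eq_zero_iff.mpr hdetT
    have hvm : Matrix.vecMul w M = x • w := by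
      rw [← Matrix.mulVec_transpose]
      rw [Matrix.sub_mulVec, Matrix.smul_mulVec, Matrix.one_mulVec, sub_eq_zero] at hw
      exact hw
    set u : G → ℂ := Matrix.vecMul w Q with hu
    have hu0 : u ≠ 0 := by
      intro h0
      apply hw0
      have : Matrix.vecMul w (Q * ((n : ℂ)⁻¹ • Qc)) = w := by rw [hQright, Matrix.vecMul_one]
      rw [← Matrix.vecMul_vecMul, ← hu, h0] at this
      rw [← this]
      simp [Matrix.vecMul]
    have huD : Matrix.vecMul u D = x • u := by
      calc Matrix.vecMul u D = Matrix.vecMul w (Q * D) := by rw [hu, Matrix.vecMul_vecMul]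
        _ = Matrix.vecMul w (M * Q) := by rw [hMQD]
        _ = Matrix.vecMul (Matrix.vecMul w M) Q := by rw [Matrix.vecMul_vecMul]
        _ = Matrix.vecMul (x • w) Q := by rw [hvm]
        _ = x • u := by rw [Matrix.smul_vecMul, hu]
    obtain ⟨g, hg⟩ := Function.ne_iff.mp hu0
    refine ⟨g, ?_⟩
    have hDg := congrFun huD g
    rw [Matrix.vecMul_diagonal, Pi.smul_apply, smul_eq_mul] at hDg
    have : ρ.character g * u g = x * u g := by rw [← hDg, mul_comm]
    exact (mul_right_cancel₀ hg this).symm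
  -- cyclotomic in solvable
  have hsub : IntermediateField.adjoin ℚ {z : ℂ | z ^ n = 1} ≤ solvableByRad ℚ ℂ := by
    rw [IntermediateField.adjoin_le_iff]
    intro z hz
    have h1 : IsSolvableByRad ℚ (z ^ n) := by
      rw [hz]
      simpa using IsSolvableByRad.base (E := ℂ) (1 : ℚ)
    exact solvableByRad.rad_mem Fintype.card_ne_zero (by rw [hz]; exact one_mem _)
  constructor
  · intro x hx
    obtain ⟨g, rfl⟩ := key x hx
    exact ⟨char_mem_cyclotomic ρ g, hsub (char_mem_cyclotomic ρ g)⟩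
  · intro x hroot
    have hdet : (x • (1 : Matrix ↑Irr ↑Irr ℂ) - M).det = 0 := by
      rw [← eval_charpoly' M x]
      exact hroot
    obtain ⟨v, hv0, hv⟩ := Matrix.exists_mulVec_eq_zero_iff.mpr hdet
    rw [Matrix.sub_mulVec, Matrix.smul_mulVec, Matrix.one_mulVec, sub_eq_zero] at hv
    obtain ⟨g, rfl⟩ := key x ⟨v, hv0, hv.symm⟩
    exact hsub (char_mem_cyclotomic ρ g)

end Aux2
end
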